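/- arXiv:math/0606216 — 2 statements merged into one kernel-verified Lean document; each statement's English description precedes it below -/
import Mathlib

section
/- Let G be a centerless group and A ⊆ G, and suppose that for every ordinal α the centralizer of A in the α-th stage of the automorphism tower is trivial: C_{G^α}(A) = {e}. Then for every ordinal α, the cardinality of G^α is at most |G|^{|A|} + ℵ₀ (cardinal exponentiation and cardinal sum, i.e. max(|G|^{|A|}, ℵ₀)). -/
universe u

/-- The automorphism tower of a centerless group `G`: an ordinal-indexed increasing
continuous chain of groups, starting at `G`, where each successor stage is (identified
with) the automorphism group of the previous stage via the conjugation embedding. -/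
structure AutTower (G : Type u) [Group G] where
  /-- the `o`-th stage `G^o` of the tower -/
  Stage : Ordinal.{u} → GrpCat.{u}
  /-- the inclusion maps of the tower -/
  map : ∀ ⦃o₁ o₂ : Ordinal.{u}⦄, o₁ ≤ o₂ → (↥(Stage o₁) →* ↥(Stage o₂))
  map_id : ∀ (o : Ordinal.{u}) (x : ↥(Stage o)), map le_rfl x = x
  map_comp : ∀ ⦃o₁ o₂ o₃ : Ordinal.{u}⦄ (h₁ : o₁ ≤ o₂) (h₂ : o₂ ≤ o₃) (x : ↥(Stage o₁)),
      map h₂ (map h₁ x) = map (h₁.trans h₂) x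
  map_injective : ∀ ⦃o₁ o₂ : Ordinal.{u}⦄ (h : o₁ ≤ o₂), Function.Injective (map h)
  /-- the identification of `G` with the `0`-th stage -/
  emb0 : G ≃* ↥(Stage 0)
  /-- the identification of the `(o+1)`-st stage with `Aut(G^o)` -/
  succIso : ∀ o : Ordinal.{u}, ↥(Stage (o + 1)) ≃* MulAut ↥(Stage o)
  /-- under the above identification, the inclusion `G^o ≤ G^{o+1}` is `g ↦` conjugation by `g` -/
  succIso_map : ∀ (o : Ordinal.{u}) (x : ↥(Stage o)),
      succIso o (map (le_self_add : o ≤ o + 1) x) = MulAut.conj x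
  /-- at limit stages the tower is continuous: `G^δ = ⋃_{α<δ} G^α` -/
  limit_covers : ∀ (o : Ordinal.{u}), Order.IsSuccLimit o → ∀ x : ↥(Stage o),
      ∃ (o' : Ordinal.{u}) (h : o' < o), x ∈ Set.range (map h.le)

namespace AutTower

variable {G : Type u} [Group G]

/-- the embedding of `G` into the `o`-th stage of its automorphism tower -/
def embed (T : AutTower G) (o : Ordinal.{u}) : G →* ↥(T.Stage o) :=
  (T.map (zero_le : (0 : Ordinal.{u}) ≤ o)).comp T.emb0.toMonoidHom

/-- `G^{o+1} = G^o`, i.e. the inclusion of stage `o` into stage `o+1` is onto -/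
def StabilizesAt (T : AutTower G) (o : Ordinal.{u}) : Prop :=
  Function.Surjective (T.map (le_self_add : o ≤ o + 1))

end AutTower


namespace AutTower
variable {G : Type u} [Group G] (T : AutTower G)

theorem map_embed {o₁ o₂ : Ordinal.{u}} (h : o₁ ≤ o₂) (g : G) :
    T.map h (T.embed o₁ g) = T.embed o₂ g := by
  simp [embed, T.map_comp]

theorem map_conj (o : Ordinal.{u}) (y : ↥(T.Stage (o+1))) (b : ↥(T.Stage o)) :
    y * T.map (le_self_add : o ≤ o + 1) b * y⁻¹
      = T.map (le_self_add : o ≤ o + 1) ((T.succIso o y) b) := by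
  apply (T.succIso o).injective
  rw [map_mul, map_mul, map_inv, T.succIso_map, T.succIso_map]
  ext g
  simp [mul_assoc]

noncomputable def rk {α : Ordinal.{u}} (x : ↥(T.Stage α)) : Ordinal.{u} :=
  sInf {o : Ordinal.{u} | ∃ h : o ≤ α, x ∈ Set.range (T.map h)}

theorem rk_mem {α : Ordinal.{u}} (x : ↥(T.Stage α)) :
    ∃ h : T.rk x ≤ α, x ∈ Set.range (T.map h) :=
  csInf_mem (s := {o : Ordinal.{u} | ∃ h : o ≤ α, x ∈ Set.range (T.map h)})
    ⟨α, ⟨le_rfl, ⟨x, T.map_id α x⟩⟩⟩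

theorem range_congr {o o' α : Ordinal.{u}} (e : o = o') (h : o ≤ α) (h' : o' ≤ α)
    {x : ↥(T.Stage α)} (hx : x ∈ Set.range (T.map h)) : x ∈ Set.range (T.map h') := by
  subst e; exact hx

theorem rk_le {α o : Ordinal.{u}} {x : ↥(T.Stage α)} (h : o ≤ α)
    (hx : x ∈ Set.range (T.map h)) : T.rk x ≤ o :=
  csInf_le (OrderBot.bddBelow _) ⟨h, hx⟩

theorem rk_not_limit {α : Ordinal.{u}} (x : ↥(T.Stage α)) : ¬ Order.IsSuccLimit (T.rk x) := by
  intro hL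
  obtain ⟨h, y, hy⟩ := T.rk_mem x
  obtain ⟨o', ho', z, hz⟩ := T.limit_covers _ hL y
  have : x ∈ Set.range (T.map (ho'.le.trans h)) := ⟨z, by rw [← T.map_comp ho'.le h, hz, hy]⟩
  exact absurd (T.rk_le _ this) (not_le.mpr ho')

theorem exists_emb0 {α : Ordinal.{u}} {x : ↥(T.Stage α)} (h : T.rk x = 0) :
    ∃ g : G, T.embed α g = x := by
  obtain ⟨hle, hx⟩ := T.rk_mem x
  obtain ⟨y, hy⟩ := T.range_congr h hle (zero_le : (0 : Ordinal.{u}) ≤ α) hx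
  refine ⟨T.emb0.symm y, ?_⟩
  simp only [embed, MonoidHom.comp_apply, MulEquiv.coe_toMonoidHom, MulEquiv.apply_symm_apply]
  exact hy

theorem exists_succ {α : Ordinal.{u}} {x : ↥(T.Stage α)} (h : T.rk x ≠ 0) :
    ∃ (o : Ordinal.{u}) (ho : o + 1 ≤ α), (∃ y : ↥(T.Stage (o+1)), T.map ho y = x) ∧
      T.rk x = o + 1 := by
  rcases Ordinal.zero_or_succ_or_isSuccLimit (T.rk x) with h0 | ⟨o, ho⟩ | hL
  · exact absurd h0 h
  · rw [← Ordinal.add_one_eq_succ] at ho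
    replace ho := ho.symm
    obtain ⟨hle, hx⟩ := T.rk_mem x
    have hle' : o + 1 ≤ α := ho ▸ hle
    exact ⟨o, hle', T.range_congr ho hle hle' hx, ho⟩
  · exact absurd hL (T.rk_not_limit x)

end AutTower


/-- the branching type for the coding `W`-type -/
def TCodeF (G : Type u) (A : Set G) : G ⊕ PUnit.{u+1} → Type u
  | .inl _ => PEmpty.{u+1}
  | .inr _ => ↥A

namespace AutTower
variable {G : Type u} [Group G] (T : AutTower G)

/-- coding of elements of the tower stages as well-founded trees -/
noncomputable def code (A : Set G) (α : Ordinal.{u}) (x : ↥(T.Stage α)) :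
    WType (TCodeF G A) :=
  if h : T.rk x = 0 then
    WType.mk (Sum.inl (Classical.choose (T.exists_emb0 h))) (fun e => e.elim)
  else
    WType.mk (Sum.inr ⟨⟩) (fun a : ↥A =>
      code A (T.exists_succ h).choose
        ((T.succIso (T.exists_succ h).choose
            ((T.exists_succ h).choose_spec.choose_spec.1.choose))
          (T.embed (T.exists_succ h).choose ↑a)))
  termination_by α
  decreasing_by
    have h1 := (T.exists_succ h).choose_spec.choose
    have h2 : (T.exists_succ h).choose < (T.exists_succ h).choose + 1 := by
      rw [Ordinal.add_one_eq_succ]; exact Order.lt_succ _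
    exact lt_of_lt_of_le h2 h1

theorem code_eq_leaf (A : Set G) {α : Ordinal.{u}} {x : ↥(T.Stage α)} (h : T.rk x = 0) :
    T.code A α x = WType.mk (Sum.inl (Classical.choose (T.exists_emb0 h))) (fun e => e.elim) := by
  rw [code, dif_pos h]

theorem code_eq_node (A : Set G) {α : Ordinal.{u}} {x : ↥(T.Stage α)} (h : T.rk x ≠ 0) :
    T.code A α x = WType.mk (Sum.inr ⟨⟩) (fun a : ↥A =>
      T.code A (T.exists_succ h).choose
        ((T.succIso (T.exists_succ h).choose
            ((T.exists_succ h).choose_spec.choose_spec.1.choose))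
          (T.embed (T.exists_succ h).choose ↑a))) := by
  rw [code, dif_neg h]

end AutTower

namespace AutTower
variable {G : Type u} [Group G] (T : AutTower G)

theorem code_inj (A : Set G)
    (hcent : ∀ α : Ordinal.{u}, Subgroup.centralizer (⇑(T.embed α) '' A) = ⊥) :
    ∀ (γ α β : Ordinal.{u}) (hα : α ≤ γ) (hβ : β ≤ γ)
      (x : ↥(T.Stage α)) (y : ↥(T.Stage β)),
      T.code A α x = T.code A β y → T.map hα x = T.map hβ y := by
  intro γ
  induction γ using Ordinal.induction with
  | h γ IH =>
    intro α β hα hβ x y hxy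
    by_cases h1 : T.rk x = 0 <;> by_cases h2 : T.rk y = 0
    · -- both leaves
      rw [T.code_eq_leaf A h1, T.code_eq_leaf A h2] at hxy
      injection hxy with ha _
      injection ha with hg
      have s1 := Classical.choose_spec (T.exists_emb0 h1)
      have s2 := Classical.choose_spec (T.exists_emb0 h2)
      rw [← s1, ← s2, T.map_embed, T.map_embed, hg]
    · rw [T.code_eq_leaf A h1, T.code_eq_node A h2] at hxy
      injection hxy with ha _
      exact absurd ha (by simp)
    · rw [T.code_eq_node A h1, T.code_eq_leaf A h2] at hxy
      injection hxy with ha _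
      exact absurd ha (by simp)
    · -- both nodes
      rw [T.code_eq_node A h1, T.code_eq_node A h2] at hxy
      injection hxy with _ hf
      have hf' := hf
      -- notation
      set o₁ := (T.exists_succ h1).choose with ho₁def
      set o₂ := (T.exists_succ h2).choose with ho₂def
      have ho₁ : o₁ + 1 ≤ α := (T.exists_succ h1).choose_spec.choose
      have ho₂ : o₂ + 1 ≤ β := (T.exists_succ h2).choose_spec.choose
      set y₁ := (T.exists_succ h1).choose_spec.choose_spec.1.choose with hy₁def
      set y₂ := (T.exists_succ h2).choose_spec.choose_spec.1.choose with hy₂def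
      have hy₁ : T.map ho₁ y₁ = x := (T.exists_succ h1).choose_spec.choose_spec.1.choose_spec
      have hy₂ : T.map ho₂ y₂ = y := (T.exists_succ h2).choose_spec.choose_spec.1.choose_spec
      have hlt₁ : o₁ < α := by
        refine lt_of_lt_of_le ?_ ho₁
        rw [Ordinal.add_one_eq_succ]; exact Order.lt_succ _
      have hlt₂ : o₂ < β := by
        refine lt_of_lt_of_le ?_ ho₂
        rw [Ordinal.add_one_eq_succ]; exact Order.lt_succ _
      have hmax : max o₁ o₂ < γ := max_lt (hlt₁.trans_le hα) (hlt₂.trans_le hβ)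
      have ho₁γ : o₁ ≤ γ := (le_max_left o₁ o₂).trans hmax.le
      have ho₂γ : o₂ ≤ γ := (le_max_right o₁ o₂).trans hmax.le
      -- children agree
      have key : ∀ a : ↥A,
          T.map ho₁γ ((T.succIso o₁ y₁) (T.embed o₁ ↑a))
            = T.map ho₂γ ((T.succIso o₂ y₂) (T.embed o₂ ↑a)) := by
        intro a
        have hch := congrFun hf' a
        have := IH (max o₁ o₂) hmax o₁ o₂ (le_max_left _ _) (le_max_right _ _) _ _ hch
        have := congrArg (T.map hmax.le) this
        rwa [T.map_comp, T.map_comp] at this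
      -- conjugation computation
      have h₁γ : o₁ + 1 ≤ γ := ho₁.trans hα
      have h₂γ : o₂ + 1 ≤ γ := ho₂.trans hβ
      have hconj : ∀ a : ↥A,
          T.map hα x * T.embed γ ↑a * (T.map hα x)⁻¹
            = T.map hβ y * T.embed γ ↑a * (T.map hβ y)⁻¹ := by
        intro a
        have c₁ : T.map hα x * T.embed γ ↑a * (T.map hα x)⁻¹
            = T.map ho₁γ ((T.succIso o₁ y₁) (T.embed o₁ ↑a)) := by
          rw [← hy₁, T.map_comp ho₁ hα, ← T.map_embed h₁γ (↑a : G),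
            ← T.map_embed ((le_self_add : o₁ ≤ o₁ + 1)) (↑a : G), ← map_inv, ← map_mul, ← map_mul,
            T.map_conj, T.map_comp]
        have c₂ : T.map hβ y * T.embed γ ↑a * (T.map hβ y)⁻¹
            = T.map ho₂γ ((T.succIso o₂ y₂) (T.embed o₂ ↑a)) := by
          rw [← hy₂, T.map_comp ho₂ hβ, ← T.map_embed h₂γ (↑a : G),
            ← T.map_embed ((le_self_add : o₂ ≤ o₂ + 1)) (↑a : G), ← map_inv, ← map_mul, ← map_mul,
            T.map_conj, T.map_comp]
        rw [c₁, c₂]; exact key a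
      -- centralizer argument
      have hz : (T.map hβ y)⁻¹ * T.map hα x ∈ Subgroup.centralizer (⇑(T.embed γ) '' A) := by
        rw [Subgroup.mem_centralizer_iff]
        rintro c ⟨a, haA, rfl⟩
        have hc := hconj ⟨a, haA⟩
        have h' : T.map hα x * T.embed γ a
            = T.map hβ y * T.embed γ a * (T.map hβ y)⁻¹ * T.map hα x := by
          rw [← hc]; group
        calc T.embed γ a * ((T.map hβ y)⁻¹ * T.map hα x)
            = (T.map hβ y)⁻¹ * (T.map hβ y * T.embed γ a * (T.map hβ y)⁻¹ * T.map hα x) := by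
              group
          _ = (T.map hβ y)⁻¹ * (T.map hα x * T.embed γ a) := by rw [← h']
          _ = (T.map hβ y)⁻¹ * T.map hα x * T.embed γ a := by group
      rw [hcent γ, Subgroup.mem_bot] at hz
      exact (inv_mul_eq_one.mp hz).symm

end AutTower

/-- If `G` is centerless and for every ordinal `α` the centralizer of `A` in `G^α`
is trivial, `C_{G^α}(A) = {e}` (with `A ⊆ G` regarded as a subset of `G^α` via the
tower embedding), then `|G^α| ≤ |G|^{|A|} + ℵ₀` for every ordinal `α`. -/
theorem stage_card_le_of_centralizer_trivial {G : Type u} [Group G]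
    (hG : Subgroup.center G = ⊥) (A : Set G) (T : AutTower G)
    (hcent : ∀ α : Ordinal.{u}, Subgroup.centralizer (⇑(T.embed α) '' A) = ⊥) :
    ∀ α : Ordinal.{u},
      Cardinal.mk ↥(T.Stage α) ≤ Cardinal.mk G ^ Cardinal.mk ↥A + Cardinal.aleph0 := by
  -- degenerate cases: the stages are trivial
  have deg : ∀ α : Ordinal.{u}, (∀ c ∈ ⇑(T.embed α) '' A, c = 1) →
      Cardinal.mk ↥(T.Stage α) ≤ Cardinal.mk G ^ Cardinal.mk ↥A + Cardinal.aleph0 := by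
    intro α himg
    have htriv : ∀ x : ↥(T.Stage α), x = 1 := by
      intro x
      have hx : x ∈ Subgroup.centralizer (⇑(T.embed α) '' A) := by
        rw [Subgroup.mem_centralizer_iff]
        intro c hc
        rw [himg c hc, one_mul, mul_one]
      rwa [hcent α, Subgroup.mem_bot] at hx
    have : Subsingleton ↥(T.Stage α) := ⟨fun a b => by rw [htriv a, htriv b]⟩
    calc Cardinal.mk ↥(T.Stage α) ≤ 1 := Cardinal.le_one_iff_subsingleton.mpr this
      _ ≤ Cardinal.aleph0 := Cardinal.one_le_aleph0
      _ ≤ _ := le_add_self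
  rcases subsingleton_or_nontrivial G with hsub | hnt
  · intro α
    refine deg α ?_
    rintro c ⟨a, _, rfl⟩
    rw [Subsingleton.elim a (1 : G), map_one]
  rcases A.eq_empty_or_nonempty with rfl | hA
  · intro α
    refine deg α ?_
    rintro c ⟨a, ha, rfl⟩
    exact absurd ha (Set.notMem_empty a)
  -- main case
  have hAne : Nonempty ↥A := hA.to_subtype
  set κ : Cardinal.{u} := Cardinal.mk G ^ Cardinal.mk ↥A + Cardinal.aleph0 with hκdef
  have hℵ : Cardinal.aleph0 ≤ κ := le_add_self
  have hA1 : 1 ≤ Cardinal.mk ↥A := Cardinal.one_le_iff_ne_zero.mpr (Cardinal.mk_ne_zero _)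
  have hG2 : 2 ≤ Cardinal.mk G := Cardinal.two_le_iff.mpr (exists_pair_ne G)
  have hpow : κ ^ Cardinal.mk ↥A ≤ κ := by
    rcases lt_or_ge (Cardinal.mk ↥A) Cardinal.aleph0 with hfin | hinf
    · exact le_of_eq (Cardinal.pow_eq hℵ hA1 hfin)
    · have h2A : Cardinal.aleph0 ≤ 2 ^ Cardinal.mk ↥A :=
        hinf.trans (Cardinal.cantor _).le
      have hGA : Cardinal.aleph0 ≤ Cardinal.mk G ^ Cardinal.mk ↥A :=
        h2A.trans (Cardinal.power_le_power_right hG2)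
      have hκ : κ = Cardinal.mk G ^ Cardinal.mk ↥A := Cardinal.add_eq_left hGA hGA
      rw [hκ, ← Cardinal.power_mul, Cardinal.mul_eq_self hinf]
  have hGκ : Cardinal.mk G ≤ κ :=
    (Cardinal.self_le_power _ hA1).trans le_self_add
  have hsum : (Cardinal.sum fun s : G ⊕ PUnit.{u+1} => κ ^ Cardinal.mk (TCodeF G A s)) ≤ κ := by
    calc (Cardinal.sum fun s : G ⊕ PUnit.{u+1} => κ ^ Cardinal.mk (TCodeF G A s))
        ≤ Cardinal.sum fun _ : G ⊕ PUnit.{u+1} => κ := by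
          refine Cardinal.sum_le_sum _ _ ?_
          rintro (g | p)
          · simp only [TCodeF, Cardinal.mk_eq_zero, Cardinal.power_zero]
            exact le_trans Cardinal.one_le_aleph0 hℵ
          · exact hpow
      _ = Cardinal.mk (G ⊕ PUnit.{u+1}) * κ := Cardinal.sum_const' _ _
      _ ≤ κ * κ := by
          refine mul_le_mul_left ?_ κ
          rw [Cardinal.mk_sum, Cardinal.mk_punit, Cardinal.lift_id, Cardinal.lift_one]
          calc Cardinal.mk G + 1 ≤ κ + κ :=
            add_le_add hGκ (le_trans Cardinal.one_le_aleph0 hℵ)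
            _ = κ := Cardinal.add_eq_self hℵ
      _ = κ := Cardinal.mul_eq_self hℵ
  intro α
  refine le_trans ?_ (WType.cardinalMk_le_of_le hsum)
  refine Cardinal.mk_le_of_injective (f := T.code A α) ?_
  intro x y hxy
  have := T.code_inj A hcent α α α le_rfl le_rfl x y hxy
  rwa [T.map_id, T.map_id] at this
end

section
/- Let G₁ be a centerless group whose automorphism tower stabilizes, let G₂ = Aut(G₁), regarded as containing G₁ via the identification of G₁ with Inn(G₁), and let A ⊆ G₁. If (G₁, A) is weakly special, then (G₂, A) is weakly special (note that the tower tops coincide: G₁^{τ_{G₁}} = G₂^{τ_{G₂}}). -/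
universe u

namespace AutTower

variable {G : Type u} [Group G]

/-- The embedding of `Aut(G)` into the `σ`-th stage of the automorphism tower of `G`
(for `σ ≥ 0 + 1`), via the identification of `Aut(G)` with the stage `G^1`. -/
def autEmbed (T : AutTower G) (σ : Ordinal.{u}) (h : (0 : Ordinal.{u}) + 1 ≤ σ) :
    MulAut G →* ↥(T.Stage σ) :=
  (T.map h).comp ((T.succIso 0).symm.toMonoidHom.comp (MulAut.congr T.emb0).toMonoidHom)

/-- `(G, A)` is weakly special, computed with `G^σ` as the top of the tower:
whenever some automorphism `ψ` of `G^σ` fixes `A` pointwise and sends `x` to `y`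
(for `x, y ∈ G`, all regarded inside `G^σ` via the tower embedding), then `x = y`. -/
def WeaklySpecialVia (T : AutTower G) (σ : Ordinal.{u}) (A : Set G) : Prop :=
  ∀ x y : G,
    (∃ ψ : MulAut ↥(T.Stage σ),
      (∀ a ∈ A, ψ (T.embed σ a) = T.embed σ a) ∧ ψ (T.embed σ x) = T.embed σ y) → x = y

end AutTower


namespace AutTower

variable {G : Type u} [Group G]

lemma bij_of_eq (T : AutTower G) {o₁ o₂ : Ordinal.{u}} (he : o₁ = o₂) (h : o₁ ≤ o₂) :
    Function.Bijective (T.map h) := by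
  subst he
  have hid : ∀ x, T.map h x = x := T.map_id o₁
  exact ⟨fun a b hab => by rw [← hid a, ← hid b, hab], fun b => ⟨b, hid b⟩⟩

lemma bij_of_surj (T : AutTower G) {o₁ o₂ o₃ : Ordinal.{u}} (h : o₁ ≤ o₂)
    (hs : Function.Surjective (T.map h)) (he : o₂ = o₃) (h' : o₁ ≤ o₃) :
    Function.Bijective (T.map h') := by
  subst he
  exact ⟨T.map_injective h', hs⟩

lemma conj_autEmbed (T : AutTower G) (σ : Ordinal.{u}) (hσ : (0 : Ordinal.{u}) + 1 ≤ σ)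
    (x : MulAut G) (g : G) :
    T.autEmbed σ hσ x * T.embed σ g * (T.autEmbed σ hσ x)⁻¹ = T.embed σ (x g) := by
  set X : ↥(T.Stage (0 + 1)) := (T.succIso 0).symm ((MulAut.congr T.emb0) x) with hX
  have key : X * T.map (le_self_add : (0 : Ordinal.{u}) ≤ 0 + 1) (T.emb0 g) * X⁻¹
      = T.map (le_self_add : (0 : Ordinal.{u}) ≤ 0 + 1) (T.emb0 (x g)) := by
    apply (T.succIso 0).injective
    rw [map_mul, map_mul, map_inv, T.succIso_map, T.succIso_map, hX,
      MulEquiv.apply_symm_apply]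
    ext v
    simp [MulAut.conj, MulAut.congr, MulAut.inv_def, mul_assoc]
  have h2 := congrArg (T.map hσ) key
  rw [map_mul, map_mul, map_inv] at h2
  have e1 : T.map hσ (T.map (le_self_add : (0 : Ordinal.{u}) ≤ 0 + 1) (T.emb0 g)) = T.embed σ g :=
    T.map_comp _ _ _
  have e2 : T.map hσ (T.map (le_self_add : (0 : Ordinal.{u}) ≤ 0 + 1) (T.emb0 (x g))) = T.embed σ (x g) :=
    T.map_comp _ _ _
  rw [e1, e2] at h2
  exact h2

end AutTower

/-- Let `G₁` be a centerless group whose automorphism tower stabilizes, with `τ` the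
least stabilization ordinal, and let `G₂ = Aut(G₁)`, regarded as containing `G₁` via
`Inn(G₁)` (i.e. as the stage `G₁^1` of the tower), and `A ⊆ G₁`. If `(G₁, A)` is
weakly special, then `(G₂, A)` is weakly special. Here the top of the automorphism
tower of `G₂` is `G₁^{max(τ,1)}`, and the tower tops indeed coincide: the inclusion
`G₁^τ → G₁^{max(τ,1)}` is bijective. -/
theorem weaklySpecial_aut_of_weaklySpecial {G : Type u} [Group G]
    (hG : Subgroup.center G = ⊥) (T : AutTower G) (τ : Ordinal.{u})
    (hstab : T.StabilizesAt τ) (hleast : ∀ β : Ordinal.{u}, β < τ → ¬ T.StabilizesAt β)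
    (A : Set G) (hws : T.WeaklySpecialVia τ A) :
    Function.Bijective (T.map (le_max_left τ 1)) ∧
      ∀ x y : MulAut G,
        (∃ ψ : MulAut ↥(T.Stage (max τ 1)),
          (∀ a ∈ A, ψ (T.embed (max τ 1) a) = T.embed (max τ 1) a) ∧
          ψ (T.autEmbed (max τ 1) (by simp) x) =
            T.autEmbed (max τ 1) (by simp) y) → x = y := by
  have hbij : Function.Bijective (T.map (le_max_left τ 1)) := by
    rcases le_or_gt 1 τ with h | h
    · exact T.bij_of_eq (max_eq_left h).symm _
    · have hτ : τ = 0 := Ordinal.lt_one_iff_zero.mp h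
      subst hτ
      exact T.bij_of_surj _ hstab (by simp) _
  refine ⟨hbij, ?_⟩
  set σ := max τ 1 with hσdef
  have hσ : (0 : Ordinal.{u}) + 1 ≤ σ := by rw [zero_add]; exact le_max_right τ 1
  let e : ↥(T.Stage τ) ≃* ↥(T.Stage σ) := MulEquiv.ofBijective _ hbij
  have hemb : ∀ g : G, e (T.embed τ g) = T.embed σ g := by
    intro g
    show T.map _ (T.map _ (T.emb0 g)) = T.map _ (T.emb0 g)
    exact T.map_comp _ _ _
  have hwsσ : T.WeaklySpecialVia σ A := by
    rintro x y ⟨ψ, hA, hxy⟩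
    refine hws x y ⟨(e.trans ψ).trans e.symm, ?_, ?_⟩
    · intro a ha
      show e.symm (ψ (e (T.embed τ a))) = T.embed τ a
      rw [hemb, hA a ha, ← hemb, e.symm_apply_apply]
    · show e.symm (ψ (e (T.embed τ x))) = T.embed τ y
      rw [hemb, hxy, ← hemb, e.symm_apply_apply]
  rintro x y ⟨ψ, hA, hxy⟩
  have hxy' : ψ (T.autEmbed σ hσ x) = T.autEmbed σ hσ y := hxy
  have hxya : ∀ a ∈ A, x a = y a := by
    intro a ha
    refine hwsσ (x a) (y a) ⟨ψ, hA, ?_⟩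
    calc ψ (T.embed σ (x a))
        = ψ (T.autEmbed σ hσ x * T.embed σ a * (T.autEmbed σ hσ x)⁻¹) := by
          rw [T.conj_autEmbed]
      _ = ψ (T.autEmbed σ hσ x) * ψ (T.embed σ a) * (ψ (T.autEmbed σ hσ x))⁻¹ := by
          rw [map_mul, map_mul, map_inv]
      _ = T.autEmbed σ hσ y * T.embed σ a * (T.autEmbed σ hσ y)⁻¹ := by
          rw [hxy', hA a ha]
      _ = T.embed σ (y a) := T.conj_autEmbed σ hσ y a
  set z : MulAut G := y⁻¹ * x with hz
  have hzg : ∀ g : G, g = z g := by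
    intro g
    refine hwsσ g (z g) ⟨MulAut.conj (T.autEmbed σ hσ z), ?_, ?_⟩
    · intro a ha
      show T.autEmbed σ hσ z * T.embed σ a * (T.autEmbed σ hσ z)⁻¹ = T.embed σ a
      rw [T.conj_autEmbed]
      have hza : z a = a := by
        rw [hz]
        show y⁻¹ (x a) = a
        rw [hxya a ha]
        exact y.symm_apply_apply a
      rw [hza]
    · exact T.conj_autEmbed σ hσ z g
  have hz1 : z = 1 := by
    ext g
    exact (hzg g).symm
  have : y⁻¹ * x = 1 := hz1
  have := inv_mul_eq_one.mp this
  exact this.symm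
end
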